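/- Consider the complete graph G' constructed from a bipartite DAG G by taking one vertex per edge of G, with edge weights: 1 if the two edges of G share a target, 2 if they share a source, 3 otherwise. Then there is a cost-preserving bijection between pebbling strategies of G in the (2,1)-I/O model with partial computations (viewed as orderings of edge eliminations) and Hamiltonian paths in G': the cost of a pebbling strategy equals the weight of the corresponding Hamiltonian path plus a fixed constant (the cost of handling the first edge), and in particular a minimum-weight Hamiltonian path in G' yields an optimal pebbling strategy for G. -/

import Mathlib

/-! The Red-Blue Pebble Game with partial computations, in the `(M,1)`-I/O model.
A pebble on a vertex means the corresponding word is in the cache; a blue pebble is a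
"dirty" partial result that must be stored (cost 1) before it can leave the cache. -/

inductive Pebble : Type
  | red
  | blue
deriving DecidableEq

/-- A configuration: the remaining (not yet computed) edges of the DAG, and the pebble
(if any) on each vertex. -/
structure Config (V : Type) where
  edges : Finset (V × V)
  peb : V → Option Pebble

variable {V : Type} [DecidableEq V] [Fintype V]

/-- The number of pebbles currently on the graph. -/
def pebCount (c : Config V) : ℕ :=
  (Finset.univ.filter fun v => (c.peb v).isSome).card

/-- One move of the game with at most `M` pebbles, together with its cost:
(R1) place a red pebble on an empty vertex, cost 1 (LOAD);
(R2) remove a red pebble, cost 0 (REMOVE), or change red to blue, cost 0;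
(R3) change a blue pebble to red, cost 1 (STORE);
(R4) if `u` is a leaf and both `u` and `v` are pebbled, delete the edge `(u,v)` for free,
     and the pebble on `v` becomes blue (partial COMPUTE);
(R5) at most `M` pebbles are on the graph at any time. -/
inductive Step (M : ℕ) : Config V → Config V → ℕ → Prop
  | load (c : Config V) (v : V) (h : c.peb v = none) (hM : pebCount c < M) :
      Step M c ⟨c.edges, Function.update c.peb v (some Pebble.red)⟩ 1
  | remove (c : Config V) (v : V) (h : c.peb v = some Pebble.red) :
      Step M c ⟨c.edges, Function.update c.peb v none⟩ 0
  | toBlue (c : Config V) (v : V) (h : c.peb v = some Pebble.red) :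
      Step M c ⟨c.edges, Function.update c.peb v (some Pebble.blue)⟩ 0
  | store (c : Config V) (v : V) (h : c.peb v = some Pebble.blue) :
      Step M c ⟨c.edges, Function.update c.peb v (some Pebble.red)⟩ 1
  | compute (c : Config V) (u v : V) (he : (u, v) ∈ c.edges)
      (hleaf : ∀ x, (x, u) ∉ c.edges)
      (hu : (c.peb u).isSome) (hv : (c.peb v).isSome) :
      Step M c ⟨c.edges.erase (u, v), Function.update c.peb v (some Pebble.blue)⟩ 0

/-- `Reach M c c' k`: configuration `c'` is reachable from `c` by a pebbling strategy of
total cost `k`. -/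
inductive Reach (M : ℕ) : Config V → Config V → ℕ → Prop
  | refl (c : Config V) : Reach M c c 0
  | tail {a b c : Config V} {k1 k2 : ℕ} :
      Reach M a b k1 → Step M b c k2 → Reach M a c (k1 + k2)

/-- The set of costs of pebbling strategies that, starting from the DAG with edge set `E`
and an empty cache, delete all edges and store all results (no dirty blue pebble
remains). -/
def Achievable (M : ℕ) (E : Finset (V × V)) : Set ℕ :=
  {k | ∃ c' : Config V, Reach M ⟨E, fun _ => none⟩ c' k ∧
    c'.edges = ∅ ∧ ∀ v, c'.peb v ≠ some Pebble.blue}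

/-- The weight function of the complete graph `G'` on the `m` edges of the bipartite DAG:
1 if the two edges share a target, 2 if they share a source, 3 otherwise. -/
def edgeW {N m : ℕ} (e : Fin m → Fin N × Fin N) : Fin m → Fin m → ℕ := fun i j =>
  if (e i).2 = (e j).2 then 1 else if (e i).1 = (e j).1 then 2 else 3

/-- The weight of the Hamiltonian path in `G'` given by the ordering `σ`. -/
def pathWeight {m : ℕ} (w : Fin m → Fin m → ℕ) (σ : Equiv.Perm (Fin m)) : ℕ :=
  ∑ i : Fin m, if h : (i : ℕ) + 1 < m then w (σ i) (σ ⟨(i : ℕ) + 1, h⟩) else 0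
set_option linter.unusedSectionVars false

lemma Step.cast {M : ℕ} {a b b' : Config V} {k : ℕ} (h : Step M a b k)
    (hb : b = b') : Step M a b' k := hb ▸ h

lemma Reach.cast {M : ℕ} {a b b' : Config V} {k k' : ℕ} (h : Reach M a b k)
    (hk : k = k') (hb : b = b') : Reach M a b' k' := by subst hk hb; exact h

lemma Reach.trans {M : ℕ} {a b c : Config V} {k1 k2 : ℕ}
    (h1 : Reach M a b k1) (h2 : Reach M b c k2) : Reach M a c (k1 + k2) := by
  induction h2 with
  | refl => simpa using h1
  | tail r s ih => exact (Reach.tail ih s).cast (by omega) rfl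

lemma Step.reach {M : ℕ} {a b : Config V} {k : ℕ} (h : Step M a b k) :
    Reach M a b k := by
  simpa using Reach.tail (Reach.refl a) h

/-- The two-pebble configuration after computing edge `(u,v)`. -/
def pebOf (u v : V) : V → Option Pebble := fun x =>
  if x = v then some Pebble.blue else if x = u then some Pebble.red else none

/-- Both endpoints red. -/
def pebRR (u v : V) : V → Option Pebble := fun x =>
  if x = v then some Pebble.red else if x = u then some Pebble.red else none

def pebOne (p : Pebble) (u : V) : V → Option Pebble := fun x =>
  if x = u then some p else none

lemma pebCount_one {S : Finset (V × V)} {p : Pebble} {u : V} :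
    pebCount (⟨S, pebOne p u⟩ : Config V) = 1 := by
  have h : (Finset.univ.filter fun v => ((pebOne p u) v).isSome) = {u} := by
    ext x; by_cases h : x = u <;> simp [pebOne, h]
  simp [pebCount, h]

lemma pebCount_none {S : Finset (V × V)} :
    pebCount (⟨S, fun _ => none⟩ : Config V) = 0 := by
  simp [pebCount]

/-- The opening moves: load both endpoints of the first edge and compute it. Cost 2. -/
lemma reach_first {S : Finset (V × V)} {u v : V} (huv : u ≠ v)
    (he : (u, v) ∈ S) (hleaf : ∀ x, (x, u) ∉ S) :
    Reach 2 ⟨S, fun _ => none⟩ ⟨S.erase (u, v), pebOf u v⟩ 2 := by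
  have s1 : Step 2 (⟨S, fun _ => none⟩ : Config V) ⟨S, pebOne Pebble.red u⟩ 1 :=
    (Step.load _ u rfl (by simp [pebCount_none])).cast (by
      congr 1; funext x
      simp only [Function.update, pebOne, pebOf, pebRR]; split_ifs <;> simp_all)
  have s2 : Step 2 (⟨S, pebOne Pebble.red u⟩ : Config V) ⟨S, pebRR u v⟩ 1 :=
    (Step.load _ v (by simp [pebOne, Ne.symm huv]) (by simp [pebCount_one])).cast (by
      congr 1; funext x
      simp only [Function.update, pebOne, pebOf, pebRR]; split_ifs <;> simp_all)
  have s3 : Step 2 (⟨S, pebRR u v⟩ : Config V) ⟨S.erase (u, v), pebOf u v⟩ 0 :=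
    (Step.compute _ u v he hleaf (by simp [pebRR, huv]) (by simp [pebRR])).cast (by
      congr 1; funext x
      simp only [Function.update, pebOne, pebOf, pebRR]; split_ifs <;> simp_all)
  exact ((s1.reach.trans s2.reach).trans s3.reach).cast (by norm_num) rfl

/-- The transition between two consecutive computes. -/
lemma reach_next {S : Finset (V × V)} {u v u' v' : V} (huv : u ≠ v)
    (hu'v' : u' ≠ v') (hvu' : v ≠ u') (huv' : u ≠ v') (hne : (u, v) ≠ (u', v'))
    (he : (u', v') ∈ S) (hleaf : ∀ x, (x, u') ∉ S) :
    Reach 2 ⟨S, pebOf u v⟩ ⟨S.erase (u', v'), pebOf u' v'⟩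
      (if v = v' then 1 else if u = u' then 2 else 3) := by
  by_cases hvv' : v = v'
  · -- share target, cost 1
    subst hvv'
    have huu' : u ≠ u' := fun h => hne (by rw [h])
    have s1 : Step 2 (⟨S, pebOf u v⟩ : Config V) ⟨S, pebOne Pebble.blue v⟩ 0 :=
      (Step.remove _ u (by simp [pebOf, huv])).cast (by
        congr 1; funext x
        simp only [Function.update, pebOne, pebOf, pebRR]; split_ifs <;> simp_all)
    have s2 : Step 2 (⟨S, pebOne Pebble.blue v⟩ : Config V) ⟨S, pebOf u' v⟩ 1 :=
      (Step.load _ u' (by simp [pebOne, hu'v']) (by simp [pebCount_one])).cast (by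
        congr 1; funext x
        simp only [Function.update, pebOne, pebOf, pebRR]; split_ifs <;> simp_all)
    have s3 : Step 2 (⟨S, pebOf u' v⟩ : Config V) ⟨S.erase (u', v), pebOf u' v⟩ 0 :=
      (Step.compute _ u' v he hleaf (by simp [pebOf, Ne.symm hvu'])
          (by simp [pebOf])).cast (by
        congr 1; funext x
        simp only [Function.update, pebOne, pebOf, pebRR]; split_ifs <;> simp_all)
    exact ((s1.reach.trans s2.reach).trans s3.reach).cast (by norm_num) rfl
  · by_cases huu' : u = u'
    · -- share source, cost 2
      subst huu'
      have s1 : Step 2 (⟨S, pebOf u v⟩ : Config V) ⟨S, pebRR u v⟩ 1 :=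
        (Step.store _ v (by simp [pebOf])).cast (by
          congr 1; funext x
          simp only [Function.update, pebOne, pebOf, pebRR]; split_ifs <;> simp_all)
      have s2 : Step 2 (⟨S, pebRR u v⟩ : Config V) ⟨S, pebOne Pebble.red u⟩ 0 :=
        (Step.remove _ v (by simp [pebRR])).cast (by
          congr 1; funext x
          simp only [Function.update, pebOne, pebOf, pebRR]; split_ifs <;> simp_all)
      have s3 : Step 2 (⟨S, pebOne Pebble.red u⟩ : Config V) ⟨S, pebRR u v'⟩ 1 :=
        (Step.load _ v' (by simp [pebOne, Ne.symm huv']) (by simp [pebCount_one])).cast (by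
          congr 1; funext x
          simp only [Function.update, pebOne, pebOf, pebRR]; split_ifs <;> simp_all)
      have s4 : Step 2 (⟨S, pebRR u v'⟩ : Config V) ⟨S.erase (u, v'), pebOf u v'⟩ 0 :=
        (Step.compute _ u v' he hleaf (by simp [pebRR, huv']) (by simp [pebRR])).cast (by
          congr 1; funext x
          simp only [Function.update, pebOne, pebOf, pebRR]; split_ifs <;> simp_all)
      exact (((s1.reach.trans s2.reach).trans s3.reach).trans s4.reach).cast
        (by simp [hvv']) rfl
    · -- disjoint, cost 3
      have s1 : Step 2 (⟨S, pebOf u v⟩ : Config V) ⟨S, pebRR u v⟩ 1 :=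
        (Step.store _ v (by simp [pebOf])).cast (by
          congr 1; funext x
          simp only [Function.update, pebOne, pebOf, pebRR]; split_ifs <;> simp_all)
      have s2 : Step 2 (⟨S, pebRR u v⟩ : Config V) ⟨S, pebOne Pebble.red u⟩ 0 :=
        (Step.remove _ v (by simp [pebRR])).cast (by
          congr 1; funext x
          simp only [Function.update, pebOne, pebOf, pebRR]; split_ifs <;> simp_all)
      have s3 : Step 2 (⟨S, pebOne Pebble.red u⟩ : Config V) ⟨S, fun _ => none⟩ 0 :=
        (Step.remove _ u (by simp [pebOne])).cast (by
          congr 1; funext x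
          simp only [Function.update, pebOne, pebOf, pebRR]; split_ifs <;> simp_all)
      have s4 : Step 2 (⟨S, fun _ => none⟩ : Config V) ⟨S, pebOne Pebble.red u'⟩ 1 :=
        (Step.load _ u' rfl (by simp [pebCount_none])).cast (by
          congr 1; funext x
          simp only [Function.update, pebOne, pebOf, pebRR]; split_ifs <;> simp_all)
      have s5 : Step 2 (⟨S, pebOne Pebble.red u'⟩ : Config V) ⟨S, pebRR u' v'⟩ 1 :=
        (Step.load _ v' (by simp [pebOne, Ne.symm hu'v']) (by simp [pebCount_one])).cast (by
          congr 1; funext x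
          simp only [Function.update, pebOne, pebOf, pebRR]; split_ifs <;> simp_all)
      have s6 : Step 2 (⟨S, pebRR u' v'⟩ : Config V) ⟨S.erase (u', v'), pebOf u' v'⟩ 0 :=
        (Step.compute _ u' v' he hleaf (by simp [pebRR, hu'v']) (by simp [pebRR])).cast (by
          congr 1; funext x
          simp only [Function.update, pebOne, pebOf, pebRR]; split_ifs <;> simp_all)
      refine ((((((s1.reach.trans s2.reach).trans s3.reach).trans s4.reach).trans
        s5.reach).trans s6.reach)).cast ?_ rfl
      simp [hvv', huu']

-- ### the canonical strategy associated with an ordering σ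

/-- The set of edges not yet computed after the first `t` computes. -/
def Sset {N m : ℕ} (e : Fin m → Fin N × Fin N) (σ : Equiv.Perm (Fin m)) (t : ℕ) :
    Finset (Fin N × Fin N) :=
  (Finset.univ.filter fun j : Fin m => t ≤ (j : ℕ)).image fun j => e (σ j)

/-- The `i`-th consecutive weight of the ordering `σ`, as a function of `i : ℕ`. -/
def wnat {N m : ℕ} (e : Fin m → Fin N × Fin N) (σ : Equiv.Perm (Fin m)) (i : ℕ) : ℕ :=
  if h : i + 1 < m then edgeW e (σ ⟨i, Nat.lt_of_succ_lt h⟩) (σ ⟨i + 1, h⟩) else 0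

section Upper

variable {N m : ℕ} {e : Fin m → Fin N × Fin N} {σ : Equiv.Perm (Fin m)}

lemma Sset_zero : Sset e σ 0 = Finset.univ.image e := by
  ext a
  simp only [Sset, Finset.mem_image, Finset.mem_filter, Finset.mem_univ, true_and,
    Nat.zero_le]
  exact ⟨fun ⟨j, hj⟩ => ⟨σ j, hj⟩, fun ⟨i, hi⟩ => ⟨σ.symm i, by simpa using hi⟩⟩

lemma Sset_subset {t : ℕ} : Sset e σ t ⊆ Finset.univ.image e := by
  rw [← Sset_zero (σ := σ)]
  intro a ha
  simp only [Sset, Finset.mem_image, Finset.mem_filter, Finset.mem_univ, true_and] at *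
  obtain ⟨j, _, hj⟩ := ha
  exact ⟨j, Nat.zero_le _, hj⟩

lemma mem_Sset {t : ℕ} (ht : t < m) : e (σ ⟨t, ht⟩) ∈ Sset e σ t := by
  simp only [Sset, Finset.mem_image, Finset.mem_filter, Finset.mem_univ, true_and]
  exact ⟨⟨t, ht⟩, le_refl _, rfl⟩

lemma Sset_succ (hinj : Function.Injective e) {t : ℕ} (ht : t < m) :
    Sset e σ (t + 1) = (Sset e σ t).erase (e (σ ⟨t, ht⟩)) := by
  ext a
  simp only [Sset, Finset.mem_erase, Finset.mem_image, Finset.mem_filter,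
    Finset.mem_univ, true_and]
  constructor
  · rintro ⟨j, hj, rfl⟩
    refine ⟨fun h => ?_, j, Nat.le_of_succ_le hj, rfl⟩
    have : j = ⟨t, ht⟩ := σ.injective (hinj h)
    rw [this] at hj; simp at hj
  · rintro ⟨hne, j, hj, rfl⟩
    refine ⟨j, ?_, rfl⟩
    rcases Nat.lt_or_ge t (j : ℕ) with h | h
    · exact h
    · exfalso; apply hne; congr 2
      exact Fin.ext (le_antisymm h hj)

lemma Sset_last : Sset e σ m = ∅ := by
  simp only [Sset, Finset.image_eq_empty, Finset.filter_eq_empty_iff]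
  intro j _
  exact Nat.not_le.mpr j.isLt

lemma no_incoming (hbip : ∀ i j : Fin m, (e i).1 ≠ (e j).2) {t : ℕ} (i : Fin m)
    (x : Fin N) : (x, (e i).1) ∉ Sset e σ t := by
  intro h
  have h' := Sset_subset h
  simp only [Finset.mem_image, Finset.mem_univ, true_and] at h'
  obtain ⟨j, hj⟩ := h'
  exact hbip i j (by rw [hj])

lemma upper_main (hinj : Function.Injective e)
    (hbip : ∀ i j : Fin m, (e i).1 ≠ (e j).2) :
    ∀ t, ∀ ht : t < m, Reach 2 ⟨Finset.univ.image e, fun _ => none⟩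
      ⟨Sset e σ (t + 1), pebOf (e (σ ⟨t, ht⟩)).1 (e (σ ⟨t, ht⟩)).2⟩
      (2 + ∑ i ∈ Finset.range t, wnat e σ i) := by
  intro t
  induction t with
  | zero =>
    intro ht
    have h0 := reach_first (S := Finset.univ.image e)
      (u := (e (σ ⟨0, ht⟩)).1) (v := (e (σ ⟨0, ht⟩)).2)
      (hbip _ _) (by simp) (fun x => by
        rw [← Sset_zero (σ := σ)]; exact no_incoming hbip _ x)
    refine h0.cast (by simp) ?_
    rw [Sset_succ hinj ht, Sset_zero]
  | succ t ih =>
    intro ht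
    have ht' : t < m := Nat.lt_of_succ_lt ht
    set i : Fin m := σ ⟨t, ht'⟩ with hi
    set j : Fin m := σ ⟨t + 1, ht⟩ with hj
    have hij : i ≠ j := by
      intro h
      have := σ.injective h
      simp only [Fin.mk.injEq] at this
      omega
    have step := reach_next (S := Sset e σ (t + 1))
      (u := (e i).1) (v := (e i).2) (u' := (e j).1) (v' := (e j).2)
      (hbip _ _) (hbip _ _) (Ne.symm (hbip j i)) (hbip i j)
      (by simpa using hinj.ne hij) (mem_Sset ht) (fun x => no_incoming hbip _ x)
    have := (ih ht').trans step
    refine this.cast ?_ ?_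
    · rw [Finset.sum_range_succ]
      have : wnat e σ t = edgeW e i j := by rw [wnat, dif_pos ht]
      rw [this]; simp only [edgeW]; ring
    · rw [Sset_succ hinj ht]

lemma pathWeight_eq_sum : pathWeight (edgeW e) σ = ∑ i ∈ Finset.range m, wnat e σ i := by
  rw [pathWeight, ← Fin.sum_univ_eq_sum_range (fun i => wnat e σ i) m]
  refine Finset.sum_congr rfl fun i _ => ?_
  by_cases h : (i : ℕ) + 1 < m
  · rw [dif_pos h, wnat, dif_pos h]
  · rw [dif_neg h, wnat, dif_neg h]

end Upper

-- ### lower bound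

/-- The set of pebbled vertices. -/
def PF (f : V → Option Pebble) : Finset V := Finset.univ.filter fun x => (f x).isSome

lemma mem_PF {f : V → Option Pebble} {x : V} : x ∈ PF f ↔ (f x).isSome := by
  simp [PF]

lemma pebCount_eq (c : Config V) : pebCount c = (PF c.peb).card := rfl

lemma PF_update_some_subset (f : V → Option Pebble) (v : V) (p : Pebble) :
    PF (Function.update f v (some p)) ⊆ insert v (PF f) := by
  intro x hx
  rcases eq_or_ne x v with rfl | h
  · simp
  · rw [mem_PF, Function.update_of_ne h] at hx
    simp [mem_PF, hx]

lemma PF_update_none_subset (f : V → Option Pebble) (v : V) :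
    PF (Function.update f v none) ⊆ PF f := by
  intro x hx
  rcases eq_or_ne x v with rfl | h
  · rw [mem_PF, Function.update_self] at hx; simp at hx
  · rw [mem_PF, Function.update_of_ne h] at hx
    simpa [mem_PF] using hx

lemma PF_update_some_eq (f : V → Option Pebble) (v : V) (p : Pebble)
    (hv : (f v).isSome) : PF (Function.update f v (some p)) = PF f := by
  ext x
  rcases eq_or_ne x v with rfl | h
  · simp [mem_PF, hv]
  · rw [mem_PF, Function.update_of_ne h, mem_PF]

/-- The pebbled vertices outside `{a, b}`. -/
def EB (f : V → Option Pebble) (a b : V) : Finset V :=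
  Finset.univ.filter fun x => (f x).isSome ∧ x ≠ a ∧ x ≠ b

lemma mem_EB {f : V → Option Pebble} {a b x : V} :
    x ∈ EB f a b ↔ (f x).isSome ∧ x ≠ a ∧ x ≠ b := by simp [EB]

lemma EB_update_some_subset (f : V → Option Pebble) (v : V) (p : Pebble) (a b : V) :
    EB (Function.update f v (some p)) a b ⊆ insert v (EB f a b) := by
  intro x hx
  rcases eq_or_ne x v with rfl | h
  · simp
  · rw [mem_EB, Function.update_of_ne h] at hx
    simp [mem_EB, hx.1, hx.2.1, hx.2.2]

lemma EB_update_none_subset (f : V → Option Pebble) (v : V) (a b : V) :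
    EB (Function.update f v none) a b ⊆ EB f a b := by
  intro x hx
  rcases eq_or_ne x v with rfl | h
  · rw [mem_EB, Function.update_self] at hx; simp at hx
  · rw [mem_EB, Function.update_of_ne h] at hx
    rw [mem_EB]; exact hx

lemma EB_update_some_eq (f : V → Option Pebble) (v : V) (p : Pebble) (a b : V)
    (hv : (f v).isSome) : EB (Function.update f v (some p)) a b = EB f a b := by
  ext x
  rcases eq_or_ne x v with rfl | h
  · simp [mem_EB, hv]
  · rw [mem_EB, Function.update_of_ne h, mem_EB]

lemma EB_eq_empty {f : V → Option Pebble} {u v : V} (hpc : (PF f).card ≤ 2)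
    (hu : (f u).isSome) (hv : (f v).isSome) (huv : u ≠ v) : EB f u v = ∅ := by
  by_contra hne
  obtain ⟨x, hx⟩ := Finset.nonempty_iff_ne_empty.mpr hne
  rw [mem_EB] at hx
  have hsub : ({x, u, v} : Finset V) ⊆ PF f := by
    intro y hy
    simp only [Finset.mem_insert, Finset.mem_singleton] at hy
    rcases hy with rfl | rfl | rfl <;> simp [mem_PF, hx.1, hu, hv]
  have h3 : ({x, u, v} : Finset V).card = 3 := by
    rw [Finset.card_insert_of_notMem (by simp [hx.2.1, hx.2.2]),
      Finset.card_insert_of_notMem (by simp [huv]), Finset.card_singleton]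
  have := Finset.card_le_card hsub
  omega

lemma not_pebbled_third {f : V → Option Pebble} {u v x : V} (hpc : (PF f).card ≤ 2)
    (hu : (f u).isSome) (hv : (f v).isSome) (huv : u ≠ v) (hxu : x ≠ u) (hxv : x ≠ v) :
    f x = none := by
  have h := EB_eq_empty hpc hu hv huv
  rcases ho : f x with _ | p
  · rfl
  · exfalso
    have : x ∈ EB f u v := by rw [mem_EB]; exact ⟨by simp [ho], hxu, hxv⟩
    rw [h] at this; simp at this

section Lower

variable {N m : ℕ} (e : Fin m → Fin N × Fin N)

/-- Sum of consecutive weights along a list of edge indices. -/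
def wsum : List (Fin m) → ℕ
  | a :: b :: r => edgeW e a b + wsum (b :: r)
  | _ => 0

/-- 1 if the dirty result of the most recent compute has (necessarily) been stored. -/
def flg (c : Config (Fin N)) (h : Fin m) : ℕ :=
  if c.peb (e h).2 = some Pebble.blue then 0 else 1

/-- The cost invariant: `L` is the reversed list of computed edges. -/
def PebInv (c : Config (Fin N)) (k : ℕ) : Prop :=
  ∃ L : List (Fin m), L.Nodup ∧
    c.edges = Finset.univ.image e \ (L.map e).toFinset ∧
    pebCount c ≤ 2 ∧
    (match L with
     | [] => pebCount c ≤ k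
     | h :: _ => 2 + wsum e L + flg e c h + (EB c.peb (e h).1 (e h).2).card ≤ k)

variable {e}

lemma inv_step (hinj : Function.Injective e)
    (hbip : ∀ i j : Fin m, (e i).1 ≠ (e j).2) {b c : Config (Fin N)} {k1 k2 : ℕ}
    (hb : PebInv e b k1) (hs : Step 2 b c k2) : PebInv e c (k1 + k2) := by
  obtain ⟨L, hnd, hedg, hpc, hineq⟩ := hb
  cases hs with
  | load v h hM =>
    refine ⟨L, hnd, hedg, ?_, ?_⟩
    · rw [pebCount_eq]
      calc (PF (Function.update b.peb v (some Pebble.red))).card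
          ≤ (insert v (PF b.peb)).card := Finset.card_le_card (PF_update_some_subset _ _ _)
        _ ≤ (PF b.peb).card + 1 := Finset.card_insert_le _ _
        _ ≤ 2 := by rw [pebCount_eq] at hM; omega
    · rcases L with _ | ⟨hd, tl⟩
      · show pebCount _ ≤ k1 + 1
        simp only at hineq
        rw [pebCount_eq]
        calc (PF (Function.update b.peb v (some Pebble.red))).card
            ≤ (insert v (PF b.peb)).card :=
              Finset.card_le_card (PF_update_some_subset _ _ _)
          _ ≤ (PF b.peb).card + 1 := Finset.card_insert_le _ _
          _ ≤ k1 + 1 := by rw [pebCount_eq] at hineq; omega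
      · show 2 + wsum e (hd :: tl) + flg e _ hd + (EB _ _ _).card ≤ k1 + 1
        simp only at hineq
        have hflg : flg e ⟨b.edges, Function.update b.peb v (some Pebble.red)⟩ hd
            = flg e b hd := by
          unfold flg
          try dsimp only
          rcases eq_or_ne (e hd).2 v with hv | hv
          · rw [hv]
            simp [Function.update_self, h]
          · simp only [Function.update_of_ne hv]
        have hEB : (EB (Function.update b.peb v (some Pebble.red)) (e hd).1 (e hd).2).card
            ≤ (EB b.peb (e hd).1 (e hd).2).card + 1 := by
          calc _ ≤ (insert v (EB b.peb (e hd).1 (e hd).2)).card :=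
                Finset.card_le_card (EB_update_some_subset _ _ _ _ _)
            _ ≤ _ := Finset.card_insert_le _ _
        simp only [hflg]
        omega
  | remove v h =>
    refine ⟨L, hnd, hedg, ?_, ?_⟩
    · rw [pebCount_eq]
      calc (PF (Function.update b.peb v none)).card
          ≤ (PF b.peb).card := Finset.card_le_card (PF_update_none_subset _ _)
        _ ≤ 2 := hpc
    · rcases L with _ | ⟨hd, tl⟩
      · show pebCount _ ≤ k1 + 0
        simp only at hineq
        rw [pebCount_eq]
        calc (PF (Function.update b.peb v none)).card
            ≤ (PF b.peb).card := Finset.card_le_card (PF_update_none_subset _ _)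
          _ ≤ k1 + 0 := by rw [pebCount_eq] at hineq; omega
      · show 2 + wsum e (hd :: tl) + flg e _ hd + (EB _ _ _).card ≤ k1 + 0
        simp only at hineq
        have hflg : flg e ⟨b.edges, Function.update b.peb v none⟩ hd = flg e b hd := by
          unfold flg
          try dsimp only
          rcases eq_or_ne (e hd).2 v with hv | hv
          · rw [hv]
            simp [Function.update_self, h]
          · simp only [Function.update_of_ne hv]
        have hEB : (EB (Function.update b.peb v none) (e hd).1 (e hd).2).card
            ≤ (EB b.peb (e hd).1 (e hd).2).card :=
          Finset.card_le_card (EB_update_none_subset _ _ _ _)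
        simp only [hflg]
        omega
  | toBlue v h =>
    have hv : (b.peb v).isSome := by rw [h]; rfl
    refine ⟨L, hnd, hedg, ?_, ?_⟩
    · rw [pebCount_eq, PF_update_some_eq _ _ _ hv]; exact hpc
    · rcases L with _ | ⟨hd, tl⟩
      · show pebCount _ ≤ k1 + 0
        simp only at hineq
        rw [pebCount_eq, PF_update_some_eq _ _ _ hv]
        rw [pebCount_eq] at hineq; omega
      · show 2 + wsum e (hd :: tl) + flg e _ hd + (EB _ _ _).card ≤ k1 + 0
        simp only at hineq
        have hflg : flg e ⟨b.edges, Function.update b.peb v (some Pebble.blue)⟩ hd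
            ≤ flg e b hd := by
          unfold flg
          try dsimp only
          rcases eq_or_ne (e hd).2 v with hv' | hv'
          · rw [hv']
            simp [Function.update_self, h]
          · simp only [Function.update_of_ne hv', le_refl]
        rw [EB_update_some_eq _ _ _ _ _ hv]
        omega
  | store v h =>
    have hv : (b.peb v).isSome := by rw [h]; rfl
    refine ⟨L, hnd, hedg, ?_, ?_⟩
    · rw [pebCount_eq, PF_update_some_eq _ _ _ hv]; exact hpc
    · rcases L with _ | ⟨hd, tl⟩
      · show pebCount _ ≤ k1 + 1
        simp only at hineq
        rw [pebCount_eq, PF_update_some_eq _ _ _ hv]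
        rw [pebCount_eq] at hineq; omega
      · show 2 + wsum e (hd :: tl) + flg e _ hd + (EB _ _ _).card ≤ k1 + 1
        simp only at hineq
        have hflg : flg e ⟨b.edges, Function.update b.peb v (some Pebble.red)⟩ hd ≤ 1 := by
          unfold flg; split <;> omega
        rw [EB_update_some_eq _ _ _ _ _ hv]
        omega
  | compute u v he hleaf hu hv =>
    -- identify the computed edge
    have hmem : (u, v) ∈ Finset.univ.image e := by
      rw [hedg] at he; exact (Finset.mem_sdiff.mp he).1
    obtain ⟨j, _, hj⟩ := Finset.mem_image.mp hmem
    have hju : (e j).1 = u := by rw [hj]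
    have hjv : (e j).2 = v := by rw [hj]
    have hjL : j ∉ L := by
      intro hjin
      have : e j ∈ (L.map e).toFinset := by
        simp only [List.mem_toFinset, List.mem_map]
        exact ⟨j, hjin, rfl⟩
      rw [hj] at this
      exact (Finset.mem_sdiff.mp (hedg ▸ he)).2 this
    have huv : u ≠ v := by rw [← hju, ← hjv]; exact hbip j j
    have hPFeq : PF (Function.update b.peb v (some Pebble.blue)) = PF b.peb :=
      PF_update_some_eq _ _ _ hv
    refine ⟨j :: L, by simp [hnd, hjL], ?_, ?_, ?_⟩
    · show b.edges.erase (u, v) = _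
      rw [hedg]
      ext a
      simp only [Finset.mem_erase, Finset.mem_sdiff, List.map_cons, List.toFinset_cons,
        Finset.mem_insert, hj]
      tauto
    · rw [pebCount_eq, hPFeq]; exact hpc
    · show 2 + wsum e (j :: L) + flg e _ j + (EB _ _ _).card ≤ k1 + 0
      have hflg : flg e ⟨b.edges.erase (u, v), Function.update b.peb v (some Pebble.blue)⟩
          j = 0 := by
        unfold flg
        try dsimp only
        simp [hjv, Function.update_self]
      have hEB0 : (EB (Function.update b.peb v (some Pebble.blue)) (e j).1 (e j).2).card
          = 0 := by
        rw [hju, hjv, EB_update_some_eq _ _ _ _ _ hv,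
          EB_eq_empty hpc hu hv huv, Finset.card_empty]
      rw [hflg, hEB0]
      -- now the main inequality
      rcases L with _ | ⟨hd, tl⟩
      · -- first compute: two pebbles are on the board, each cost a load
        simp only at hineq
        have h2 : 2 ≤ pebCount b := by
          rw [pebCount_eq]
          have hsub : ({u, v} : Finset (Fin N)) ⊆ PF b.peb := by
            intro y hy
            simp only [Finset.mem_insert, Finset.mem_singleton] at hy
            rcases hy with rfl | rfl <;> simp [mem_PF, hu, hv]
          have h2' : ({u, v} : Finset (Fin N)).card = 2 := by
            rw [Finset.card_insert_of_notMem (by simp [huv]), Finset.card_singleton]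
          have := Finset.card_le_card hsub
          omega
        show 2 + wsum e [j] + 0 + 0 ≤ k1 + 0
        have : wsum e [j] = 0 := rfl
        omega
      · -- subsequent compute: the new weight has been paid since the last one
        simp only at hineq
        have hjhd : j ≠ hd := fun hcon => hjL (hcon ▸ List.mem_cons_self)
        have hehd : e j ≠ e hd := fun hcon => hjhd (hinj hcon)
        have key : edgeW e j hd ≤ flg e b hd + (EB b.peb (e hd).1 (e hd).2).card := by
          rcases eq_or_ne (e j).2 (e hd).2 with hvv | hvv
          · -- shared target: weight 1, and the other source was loaded
            have h1 : edgeW e j hd = 1 := by rw [edgeW, if_pos hvv]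
            have hmemEB : u ∈ EB b.peb (e hd).1 (e hd).2 := by
              rw [mem_EB]
              refine ⟨hu, ?_, ?_⟩
              · intro hcon
                apply hehd
                have : (e j).1 = (e hd).1 := by rw [hju, hcon]
                exact Prod.ext this hvv
              · rw [← hju]; exact hbip j hd
            have : 0 < (EB b.peb (e hd).1 (e hd).2).card := Finset.card_pos.mpr ⟨u, hmemEB⟩
            omega
          · have hblue : flg e b hd = 1 := by
              have hbnone : b.peb (e hd).2 = none := by
                refine not_pebbled_third hpc hu hv huv ?_ ?_
                · rw [← hju]; exact Ne.symm (hbip j hd)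
                · rw [← hjv]; exact Ne.symm hvv
              unfold flg
              try dsimp only
              rw [hbnone]
              simp
            rcases eq_or_ne (e j).1 (e hd).1 with huu | huu
            · -- shared source: weight 2
              have h2 : edgeW e j hd = 2 := by rw [edgeW, if_neg hvv, if_pos huu]
              have hmemEB : v ∈ EB b.peb (e hd).1 (e hd).2 := by
                rw [mem_EB]
                refine ⟨hv, ?_, ?_⟩
                · rw [← hjv]; exact Ne.symm (hbip hd j)
                · rw [← hjv]; exact hvv
              have : 0 < (EB b.peb (e hd).1 (e hd).2).card :=
                Finset.card_pos.mpr ⟨v, hmemEB⟩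
              omega
            · -- disjoint: weight 3
              have h3 : edgeW e j hd = 3 := by rw [edgeW, if_neg hvv, if_neg huu]
              have hsub : ({u, v} : Finset (Fin N)) ⊆ EB b.peb (e hd).1 (e hd).2 := by
                intro y hy
                simp only [Finset.mem_insert, Finset.mem_singleton] at hy
                rcases hy with rfl | rfl <;> rw [mem_EB]
                · exact ⟨hu, by rw [← hju]; exact huu, by rw [← hju]; exact hbip j hd⟩
                · exact ⟨hv, by rw [← hjv]; exact Ne.symm (hbip hd j),
                    by rw [← hjv]; exact hvv⟩
              have h2' : ({u, v} : Finset (Fin N)).card = 2 := by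
                rw [Finset.card_insert_of_notMem (by simp [huv]), Finset.card_singleton]
              have := Finset.card_le_card hsub
              omega
        have hws : wsum e (j :: hd :: tl) = edgeW e j hd + wsum e (hd :: tl) := rfl
        omega

lemma inv_reach (hinj : Function.Injective e)
    (hbip : ∀ i j : Fin m, (e i).1 ≠ (e j).2) {c : Config (Fin N)} {k : ℕ}
    (h : Reach 2 ⟨Finset.univ.image e, fun _ => none⟩ c k) : PebInv e c k := by
  induction h with
  | refl =>
    refine ⟨[], List.nodup_nil, by simp, ?_, ?_⟩
    · rw [pebCount_none]; omega
    · show pebCount _ ≤ 0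
      rw [pebCount_none]
  | tail r s ih => exact inv_step hinj hbip ih s

end Lower

section Glue

variable {N m : ℕ} {e : Fin m → Fin N × Fin N}

lemma edgeW_symm (a b : Fin m) : edgeW e a b = edgeW e b a := by
  unfold edgeW
  split_ifs <;> simp_all

lemma wsum_concat (a : Fin m) :
    ∀ l : List (Fin m), wsum e (l ++ [a]) =
      wsum e l + (match l.getLast? with | some b => edgeW e b a | none => 0) := by
  intro l
  induction l with
  | nil => simp [wsum]
  | cons x l' ih =>
    cases l' with
    | nil => simp [wsum]
    | cons y r =>
      have h1 : wsum e ((x :: y :: r) ++ [a]) = edgeW e x y + wsum e ((y :: r) ++ [a]) :=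
        rfl
      rw [h1, ih]
      have h2 : wsum e (x :: y :: r) = edgeW e x y + wsum e (y :: r) := rfl
      rw [h2, List.getLast?_cons_cons]
      omega

lemma wsum_reverse : ∀ M : List (Fin m), wsum e M.reverse = wsum e M := by
  intro M
  induction M with
  | nil => rfl
  | cons a M' ih =>
    rw [List.reverse_cons, wsum_concat, ih, List.getLast?_reverse]
    cases M' with
    | nil => rfl
    | cons b r =>
      have h1 : wsum e (a :: b :: r) = edgeW e a b + wsum e (b :: r) := rfl
      rw [h1, List.head?_cons]
      simp only
      rw [edgeW_symm b a]
      omega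

lemma wsum_getD (d : Fin m) :
    ∀ M : List (Fin m),
      (∑ i ∈ Finset.range (M.length - 1),
        edgeW e (M.getD i d) (M.getD (i + 1) d)) = wsum e M := by
  intro M
  induction M with
  | nil => simp [wsum]
  | cons a M' ih =>
    cases M' with
    | nil => simp [wsum]
    | cons b r =>
      have hlen : (a :: b :: r).length - 1 = (b :: r).length - 1 + 1 := by
        simp
      rw [hlen, Finset.sum_range_succ']
      have h1 : ∀ i, (a :: b :: r).getD (i + 1) d = (b :: r).getD i d := fun i => rfl
      have h2 : (a :: b :: r).getD 0 d = a := rfl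
      simp only [h1, h2]
      rw [ih]
      have : wsum e (a :: b :: r) = edgeW e a b + wsum e (b :: r) := rfl
      rw [this]
      have h3 : (b :: r).getD 0 d = b := rfl
      rw [h3]
      omega

/-- Every nodup list of all `m` edge indices gives a Hamiltonian path of the right
weight. -/
lemma exists_perm_of_list (hm : 0 < m) (M : List (Fin m)) (hnd : M.Nodup)
    (hlen : M.length = m) :
    ∃ σ : Equiv.Perm (Fin m), pathWeight (edgeW e) σ = wsum e M := by
  classical
  set d : Fin m := ⟨0, hm⟩
  have hget : ∀ i : Fin m, (i : ℕ) < M.length := fun i => by rw [hlen]; exact i.isLt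
  set f : Fin m → Fin m := fun i => M.get ⟨i, hget i⟩ with hf
  have hinjf : Function.Injective f := by
    intro i j hij
    have := (List.Nodup.get_inj_iff hnd).mp hij
    simpa [Fin.ext_iff] using this
  obtain ⟨σ, hσ⟩ : ∃ σ : Equiv.Perm (Fin m), ∀ i, σ i = f i :=
    ⟨Equiv.ofBijective f (Finite.injective_iff_bijective.mp hinjf), fun i => rfl⟩
  refine ⟨σ, ?_⟩
  have hfd : ∀ i : Fin m, f i = M.getD i d := by
    intro i
    rw [hf]
    simp only []
    rw [List.getD_eq_get M d ⟨i, hget i⟩]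
  rw [pathWeight_eq_sum, ← wsum_getD d M, hlen]
  obtain ⟨n, rfl⟩ : ∃ n, m = n + 1 := ⟨m - 1, by omega⟩
  rw [Finset.sum_range_succ]
  have hlast : wnat e σ n = 0 := by
    rw [wnat, dif_neg (by omega)]
  rw [hlast]
  have : (n + 1) - 1 = n := by omega
  rw [this]
  rw [Nat.add_zero]
  apply Finset.sum_congr rfl
  intro i hi
  rw [Finset.mem_range] at hi
  rw [wnat, dif_pos (by omega)]
  have e1 : σ ⟨i, by omega⟩ = M.getD i d := by rw [hσ, hfd]
  have e2 : σ ⟨i + 1, by omega⟩ = M.getD (i + 1) d := by rw [hσ, hfd]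
  rw [e1, e2]

end Glue

/-- let `G` be a bipartite DAG with `m ≥ 1` distinct edges `e 0, ..., e (m-1)`
(no source is a target), and let `G'` be the complete graph on the edges of `G` with
weights 1/2/3 as in `edgeW`.  Pebbling strategies of `G` in the `(2,1)`-I/O model
correspond to Hamiltonian paths of `G'` (orderings `σ` of the edges), preserving cost up
to the fixed constant 3 for handling the first edge: every ordering `σ` yields a strategy
of cost `pathWeight σ + 3`, and every strategy is at least as expensive as the one coming
from some ordering; in particular a minimum-weight Hamiltonian path yields an optimal
pebbling strategy. -/
theorem stmt10 (N m : ℕ) (hm : 1 ≤ m) (e : Fin m → Fin N × Fin N)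
    (hinj : Function.Injective e)
    (hbip : ∀ i j : Fin m, (e i).1 ≠ (e j).2) :
    (∀ σ : Equiv.Perm (Fin m),
        pathWeight (edgeW e) σ + 3 ∈ Achievable 2 (Finset.univ.image e)) ∧
    (∀ k ∈ Achievable 2 (Finset.univ.image e),
        ∃ σ : Equiv.Perm (Fin m), pathWeight (edgeW e) σ + 3 ≤ k) := by
  constructor
  · -- upper bound: every ordering yields a strategy of matching cost
    intro σ
    obtain ⟨n, rfl⟩ : ∃ n, m = n + 1 := ⟨m - 1, by omega⟩
    have ht : n < n + 1 := by omega
    set i : Fin (n + 1) := σ ⟨n, ht⟩ with hi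
    have main := upper_main (σ := σ) hinj hbip n ht
    have hS : Sset e σ (n + 1) = ∅ := Sset_last
    rw [hS] at main
    have hst : Step 2 (⟨∅, pebOf (e i).1 (e i).2⟩ : Config (Fin N))
        ⟨∅, Function.update (pebOf (e i).1 (e i).2) (e i).2 (some Pebble.red)⟩ 1 :=
      (Step.store _ (e i).2 (by simp [pebOf])).cast rfl
    have htot := main.trans hst.reach
    have hpw : pathWeight (edgeW e) σ = ∑ x ∈ Finset.range n, wnat e σ x := by
      rw [pathWeight_eq_sum, Finset.sum_range_succ]
      have : wnat e σ n = 0 := by rw [wnat, dif_neg (by omega)]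
      rw [this, Nat.add_zero]
    refine ⟨⟨∅, Function.update (pebOf (e i).1 (e i).2) (e i).2 (some Pebble.red)⟩,
      htot.cast (by rw [hpw]; omega) rfl, rfl, ?_⟩
    intro x
    dsimp only
    rcases eq_or_ne x (e i).2 with rfl | hx
    · rw [Function.update_self]; simp
    · rw [Function.update_of_ne hx]
      unfold pebOf
      split_ifs <;> simp_all
  · -- lower bound: every strategy is at least as costly as some ordering
    intro k hk
    obtain ⟨c', hr, hemp, hnb⟩ := hk
    obtain ⟨L, hnd, hedg, hpc, hineq⟩ := inv_reach hinj hbip hr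
    have hm0 : 0 < m := hm
    rcases L with _ | ⟨hd, tl⟩
    · exfalso
      rw [hemp] at hedg
      have : e ⟨0, hm0⟩ ∈ Finset.univ.image e \ (List.map e []).toFinset := by
        simp
      rw [← hedg] at this
      simp at this
    · have hfull : ∀ i : Fin m, i ∈ (hd :: tl) := by
        intro i
        have hmem : e i ∈ Finset.univ.image e := Finset.mem_image_of_mem e (by simp)
        have : e i ∉ Finset.univ.image e \ (List.map e (hd :: tl)).toFinset := by
          rw [← hedg, hemp]; simp
        have : e i ∈ (List.map e (hd :: tl)).toFinset := by
          by_contra hcon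
          exact this (Finset.mem_sdiff.mpr ⟨hmem, hcon⟩)
        simp only [List.mem_toFinset, List.mem_map] at this
        obtain ⟨j, hj, hje⟩ := this
        rwa [← hinj hje]
      have hlen : (hd :: tl).length = m := by
        have h1 : (hd :: tl).toFinset = Finset.univ := by
          ext x; simpa using hfull x
        have h2 : (hd :: tl).toFinset.card = (hd :: tl).length :=
          List.toFinset_card_of_nodup hnd
        rw [h1, Finset.card_univ, Fintype.card_fin] at h2
        exact h2.symm
      simp only at hineq
      have hflg : flg e c' hd = 1 := by
        unfold flg
        rw [if_neg (hnb _)]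
      rw [hflg] at hineq
      obtain ⟨σ, hσ⟩ := exists_perm_of_list (e := e) hm0 (hd :: tl).reverse
        (List.nodup_reverse.mpr hnd) (by rw [List.length_reverse, hlen])
      refine ⟨σ, ?_⟩
      rw [hσ, wsum_reverse]
      omega
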